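/- Let X be a compact metric space, ε > 0, and F ⊆ C(X) a finite set. Choose η > 0 such that |f(x) − f(x')| < ε/2 for all f ∈ F whenever dist(x,x') < η. Let φ, ψ : C(X) → Mₙ(ℂ) be unital *-homomorphisms with spectra (lists of eigenvalue-points with multiplicity) Λ_φ = (x₁',…,xₙ') and Λ_ψ = (y₁',…,yₙ') (each point repeated according to the rank of its spectral projection). If there exists a permutation Δ of {1,…,n} with dist(x_i', y'_{Δ(i)}) < η for all i, then there is a unitary w ∈ Mₙ(ℂ) with ‖φ(f) − w*ψ(f)w‖ < ε for all f ∈ F. -/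

import Mathlib

set_option synthInstance.maxHeartbeats 1000000
set_option maxHeartbeats 2000000

open scoped Matrix.Norms.L2Operator

open Matrix in
private lemma vmv_mul {n : ℕ} (a b c d : Fin n → ℂ) :
    vecMulVec a b * vecMulVec c d = (b ⬝ᵥ c) • vecMulVec a d := by
  ext i j
  simp only [mul_apply, vecMulVec_apply, Matrix.smul_apply, dotProduct, smul_eq_mul,
    Finset.sum_mul]
  exact Finset.sum_congr rfl fun k _ => by ring

open Matrix in
private lemma vmv_mulVec {n : ℕ} (a b y : Fin n → ℂ) :
    vecMulVec a b *ᵥ y = (b ⬝ᵥ y) • a := by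
  ext i
  simp only [mulVec, dotProduct, vecMulVec_apply, Pi.smul_apply, smul_eq_mul, Finset.sum_mul]
  exact Finset.sum_congr rfl fun k _ => by ring

open Matrix in
private lemma vmv_star {n : ℕ} (a b : Fin n → ℂ) :
    star (vecMulVec a b) = vecMulVec (star b) (star a) := by
  ext i j
  simp [vecMulVec_apply, star_apply, mul_comm]

open Matrix in
private lemma dot_self_eq {n : ℕ} (z : Fin n → ℂ) :
    star z ⬝ᵥ z = ((∑ a, ‖z a‖^2 : ℝ) : ℂ) := by
  push_cast
  simp only [dotProduct, Pi.star_apply]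
  refine Finset.sum_congr rfl fun a _ => ?_
  rw [Complex.star_def, RCLike.conj_mul]
  norm_cast

open Matrix in
private lemma rankOne_decomp {n : ℕ} (e : Matrix (Fin n) (Fin n) ℂ)
    (hidem : e * e = e) (hsa : star e = e) (hrank : e.rank = 1) :
    ∃ u : Fin n → ℂ, star u ⬝ᵥ u = 1 ∧ e = vecMulVec u (star u) := by
  classical
  have hne : e ≠ 0 := by
    intro h
    rw [h, Matrix.rank_zero] at hrank
    exact one_ne_zero hrank.symm
  obtain ⟨a₀, b₀, hab⟩ : ∃ a b, e a b ≠ 0 := by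
    by_contra h
    push_neg at h
    exact hne (Matrix.ext fun a b => h a b)
  set v : Fin n → ℂ := fun a => e a b₀ with hv
  have hva : v a₀ ≠ 0 := hab
  have hv0 : v ≠ 0 := fun h => hva (congrFun h a₀)
  have hconj : ∀ a b, e b a = starRingEnd ℂ (e a b) := by
    intro a b
    conv_lhs => rw [← hsa]
    rfl
  have hvmem : v ∈ LinearMap.range e.mulVecLin := by
    refine ⟨Pi.single b₀ 1, ?_⟩
    rw [Matrix.mulVecLin_apply, Matrix.mulVec_single]
    funext a; simp [hv]
  have hspan : Submodule.span ℂ {v} = LinearMap.range e.mulVecLin := by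
    apply Submodule.eq_of_le_of_finrank_le
    · rw [Submodule.span_le, Set.singleton_subset_iff]; exact hvmem
    · rw [finrank_span_singleton hv0]
      exact le_of_eq hrank
  have hcol : ∀ b, ∃ c : ℂ, ∀ a, e a b = c * v a := by
    intro b
    have : (fun a => e a b) ∈ LinearMap.range e.mulVecLin := by
      refine ⟨Pi.single b 1, ?_⟩
      rw [Matrix.mulVecLin_apply, Matrix.mulVec_single]
      funext a; simp
    rw [← hspan, Submodule.mem_span_singleton] at this
    obtain ⟨c, hc⟩ := this
    exact ⟨c, fun a => by rw [← congrFun hc a]; simp [mul_comm]⟩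
  choose c hc using hcol
  have hcb₀ : c b₀ = 1 := by
    have h1 : v a₀ = c b₀ * v a₀ := hc b₀ a₀
    have h2 : c b₀ * v a₀ = 1 * v a₀ := by rw [one_mul]; exact h1.symm
    exact mul_right_cancel₀ hva h2
  set r : ℝ := ∑ k, Complex.normSq (v k) with hrdef
  have hd : e b₀ b₀ = (r : ℂ) := by
    conv_lhs => rw [← hidem]
    rw [Matrix.mul_apply, hrdef, Complex.ofReal_sum]
    refine Finset.sum_congr rfl fun k _ => ?_
    rw [hconj k b₀, show e k b₀ = v k from rfl, mul_comm, Complex.mul_conj]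
  have hrpos : 0 < r := by
    apply Finset.sum_pos' (fun k _ => Complex.normSq_nonneg _)
    exact ⟨a₀, Finset.mem_univ _, Complex.normSq_pos.2 hva⟩
  have hrne : (r : ℂ) ≠ 0 := by exact_mod_cast ne_of_gt hrpos
  have hca : ∀ a, c a = starRingEnd ℂ (v a) / r := by
    intro a
    have h1 : e b₀ a = c a * v b₀ := hc a b₀
    have h2 : e b₀ a = starRingEnd ℂ (e a b₀) := hconj a b₀
    have h3 : v b₀ = (r : ℂ) := hd
    rw [h2, h3] at h1
    have : starRingEnd ℂ (v a) = c a * r := h1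
    field_simp [this]
    exact this.symm
  have hE : ∀ a b, e a b = v a * starRingEnd ℂ (v b) / r := by
    intro a b
    rw [hc b a, hca b]
    ring
  set t : ℝ := Real.sqrt r with htdef
  have htpos : 0 < t := Real.sqrt_pos.2 hrpos
  have ht2 : (t : ℝ) * t = r := Real.mul_self_sqrt hrpos.le
  have ht2' : t ^ 2 = r := by rw [sq]; exact ht2
  have htne : t ≠ 0 := ne_of_gt htpos
  have hsumv : ∑ a, ‖v a‖ ^ 2 = r := by
    rw [hrdef]
    refine Finset.sum_congr rfl fun a _ => ?_
    rw [Complex.normSq_eq_norm_sq]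
  have htr : ((t : ℂ)) * t = (r : ℂ) := by exact_mod_cast ht2
  refine ⟨fun a => ((t : ℂ))⁻¹ * v a, ?_, ?_⟩
  · rw [dot_self_eq]
    have h1 : ∑ a, ‖((t:ℂ))⁻¹ * v a‖ ^ 2 = 1 := by
      simp only [norm_mul, norm_inv, Complex.norm_real, Real.norm_eq_abs,
        abs_of_pos htpos, mul_pow]
      rw [← Finset.mul_sum, hsumv, inv_pow, ht2']
      field_simp
    rw [h1]
    norm_num
  · ext a b
    rw [vecMulVec_apply, Pi.star_apply, hE a b]
    simp only [star_mul', Complex.star_def, map_inv₀, Complex.conj_ofReal]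
    field_simp
    ring_nf
    rw [inv_pow, sq, htr]
    have : (↑r : ℂ) * (↑r)⁻¹ = 1 := mul_inv_cancel₀ hrne
    rw [mul_assoc, this, mul_one]

open Matrix in
private lemma my_sum_dot {n : ℕ} (f : Fin n → Fin n → ℂ) (v : Fin n → ℂ) :
    (∑ i, f i) ⬝ᵥ v = ∑ i, f i ⬝ᵥ v := by
  simp only [dotProduct, Finset.sum_apply, Finset.sum_mul]
  exact Finset.sum_comm

open Matrix in
private lemma my_dot_sum {n : ℕ} (f : Fin n → Fin n → ℂ) (v : Fin n → ℂ) :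
    v ⬝ᵥ (∑ i, f i) = ∑ i, v ⬝ᵥ f i := by
  simp only [dotProduct, Finset.sum_apply, Finset.mul_sum]
  exact Finset.sum_comm

open Matrix in
private lemma my_sum_mulVec {n : ℕ} (M : Fin n → Matrix (Fin n) (Fin n) ℂ) (y : Fin n → ℂ) :
    (∑ i, M i) *ᵥ y = ∑ i, M i *ᵥ y := by
  ext a
  simp only [mulVec, dotProduct, Finset.sum_apply, Matrix.sum_apply, Finset.sum_mul]
  exact Finset.sum_comm

open Matrix in
private lemma my_orth_dot {n : ℕ} (u : Fin n → Fin n → ℂ)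
    (horth : ∀ i j, star (u i) ⬝ᵥ u j = if i = j then 1 else 0)
    (d : Fin n → ℂ) :
    star (∑ i, d i • u i) ⬝ᵥ (∑ j, d j • u j) = ((∑ i, ‖d i‖ ^ 2 : ℝ) : ℂ) := by
  rw [star_sum]
  simp only [star_smul]
  rw [my_sum_dot]
  rw [Complex.ofReal_sum]
  refine Finset.sum_congr rfl fun i _ => ?_
  rw [my_dot_sum]
  simp only [smul_dotProduct, dotProduct_smul, horth, smul_eq_mul,
    mul_ite, mul_one, mul_zero, Finset.sum_ite_eq, Finset.mem_univ, if_true]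
  rw [Complex.star_def, RCLike.mul_conj]
  norm_cast

open Matrix in
private lemma norm_sum_smul_le {n : ℕ} (u : Fin n → Fin n → ℂ)
    (horth : ∀ i j, star (u i) ⬝ᵥ u j = if i = j then 1 else 0)
    (hsum : (∑ i, vecMulVec (u i) (star (u i))) = (1 : Matrix (Fin n) (Fin n) ℂ))
    (c : Fin n → ℂ) (C : ℝ) (hC : 0 ≤ C) (hc : ∀ i, ‖c i‖ ≤ C) :
    ‖∑ i, c i • vecMulVec (u i) (star (u i))‖ ≤ C := by
  classical
  set A : Matrix (Fin n) (Fin n) ℂ := ∑ i, c i • vecMulVec (u i) (star (u i)) with hA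
  rw [Matrix.l2_opNorm_def]
  refine ContinuousLinearMap.opNorm_le_bound _ hC fun x => ?_
  set y : Fin n → ℂ := fun a => x a with hy
  set t : Fin n → ℂ := fun i => star (u i) ⬝ᵥ y with ht
  have hAy : A *ᵥ y = ∑ i, (c i * t i) • u i := by
    rw [hA, my_sum_mulVec]
    refine Finset.sum_congr rfl fun i _ => ?_
    rw [Matrix.smul_mulVec, vmv_mulVec, smul_smul]
  have hyx : y = ∑ i, t i • u i := by
    conv_lhs => rw [← Matrix.one_mulVec y, ← hsum, my_sum_mulVec]
    refine Finset.sum_congr rfl fun i _ => ?_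
    rw [vmv_mulVec]
  have key : ∑ a, ‖(A *ᵥ y) a‖ ^ 2 ≤ C ^ 2 * ∑ a, ‖y a‖ ^ 2 := by
    have h1 : (∑ a, ‖(A *ᵥ y) a‖ ^ 2 : ℝ) = ∑ i, ‖c i * t i‖ ^ 2 := by
      rw [hAy]
      have h := dot_self_eq (∑ i, (c i * t i) • u i)
      rw [my_orth_dot u horth (fun i => c i * t i)] at h
      exact_mod_cast h.symm
    have h2 : (∑ a, ‖y a‖ ^ 2 : ℝ) = ∑ i, ‖t i‖ ^ 2 := by
      conv_lhs => rw [hyx]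
      have h := dot_self_eq (∑ i, t i • u i)
      rw [my_orth_dot u horth t] at h
      exact_mod_cast h.symm
    rw [h1, h2, Finset.mul_sum]
    refine Finset.sum_le_sum fun i _ => ?_
    rw [norm_mul, mul_pow]
    have h3 : ‖c i‖ ^ 2 ≤ C ^ 2 := by
      apply pow_le_pow_left₀ (norm_nonneg _) (hc i) 2
    exact mul_le_mul_of_nonneg_right h3 (sq_nonneg _)
  have hnx : ‖x‖ = Real.sqrt (∑ a, ‖y a‖ ^ 2) := EuclideanSpace.norm_eq x
  have hnA : ‖(Matrix.toEuclideanLin.trans LinearMap.toContinuousLinearMap A) x‖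
      = Real.sqrt (∑ a, ‖(A *ᵥ y) a‖ ^ 2) := by
    rw [EuclideanSpace.norm_eq]
    rfl
  rw [hnA, hnx]
  calc Real.sqrt (∑ a, ‖(A *ᵥ y) a‖ ^ 2) ≤ Real.sqrt (C ^ 2 * ∑ a, ‖y a‖ ^ 2) :=
        Real.sqrt_le_sqrt key
    _ = C * Real.sqrt (∑ a, ‖y a‖ ^ 2) := by
        rw [Real.sqrt_mul (sq_nonneg C), Real.sqrt_sq hC]

open Matrix in
private lemma orth_of_mul_eq_zero {n : ℕ} (a b : Fin n → ℂ)
    (ha : star a ⬝ᵥ a = 1) (hb : star b ⬝ᵥ b = 1)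
    (h : vecMulVec a (star a) * vecMulVec b (star b) = 0) :
    star a ⬝ᵥ b = 0 := by
  rw [vmv_mul] at h
  by_contra hne
  have h0 : vecMulVec a (star b) = 0 := by
    rcases smul_eq_zero.mp h with h' | h'
    · exact absurd h' hne
    · exact h'
  obtain ⟨p, hp⟩ : ∃ p, a p ≠ 0 := by
    by_contra hpa
    push_neg at hpa
    rw [show a = 0 from funext hpa] at ha
    simp [dotProduct] at ha
  obtain ⟨q, hq⟩ : ∃ q, b q ≠ 0 := by
    by_contra hqb
    push_neg at hqb
    rw [show b = 0 from funext hqb] at hb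
    simp [dotProduct] at hb
  have h1 : vecMulVec a (star b) p q = 0 := by rw [h0]; rfl
  rw [vecMulVec_apply] at h1
  rcases mul_eq_zero.mp h1 with h' | h'
  · exact hp h'
  · exact hq (by simpa using h')

open Matrix

/-- If the spectra (with multiplicity) of two unital *-homomorphisms
`C(X) → Mₙ(ℂ)` can be matched within `η`, where `η` is a modulus of continuity for
`F` with tolerance `ε/2`, then the homomorphisms are unitarily equivalent up to
`ε` on `F`. -/
theorem stmt_14 {X : Type*} [MetricSpace X] [CompactSpace X]
    (ε η : ℝ) (hε : 0 < ε) (hη : 0 < η)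
    (F : Finset C(X, ℂ))
    (hmod : ∀ f ∈ F, ∀ x x' : X, dist x x' < η → ‖f x - f x'‖ < ε / 2)
    (n : ℕ)
    (φ ψ : C(X, ℂ) →⋆ₐ[ℂ] Matrix (Fin n) (Fin n) ℂ)
    (x' y' : Fin n → X)
    (e e' : Fin n → Matrix (Fin n) (Fin n) ℂ)
    (heproj : ∀ i, e i * e i = e i ∧ star (e i) = e i)
    (he'proj : ∀ i, e' i * e' i = e' i ∧ star (e' i) = e' i)
    (herank : ∀ i, (e i).rank = 1) (he'rank : ∀ i, (e' i).rank = 1)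
    (heorth : ∀ i j, i ≠ j → e i * e j = 0)
    (he'orth : ∀ i j, i ≠ j → e' i * e' j = 0)
    (hesum : ∑ i, e i = 1) (he'sum : ∑ i, e' i = 1)
    (hφ : ∀ f : C(X, ℂ), φ f = ∑ i, f (x' i) • e i)
    (hψ : ∀ f : C(X, ℂ), ψ f = ∑ i, f (y' i) • e' i)
    (Δ : Equiv.Perm (Fin n)) (hΔ : ∀ i, dist (x' i) (y' (Δ i)) < η) :
    ∃ w ∈ Matrix.unitaryGroup (Fin n) ℂ,
      ∀ f ∈ F, ‖φ f - star w * ψ f * w‖ < ε := by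
  classical
  choose u hu1 hu2 using fun i => rankOne_decomp (e i) (heproj i).1 (heproj i).2 (herank i)
  choose v hv1 hv2 using fun i => rankOne_decomp (e' i) (he'proj i).1 (he'proj i).2 (he'rank i)
  have horthu : ∀ i j, star (u i) ⬝ᵥ u j = if i = j then 1 else 0 := by
    intro i j
    by_cases hij : i = j
    · subst hij; simp [hu1 i]
    · rw [if_neg hij]
      refine orth_of_mul_eq_zero _ _ (hu1 i) (hu1 j) ?_
      rw [← hu2 i, ← hu2 j]
      exact heorth i j hij
  have horthv : ∀ i j, star (v i) ⬝ᵥ v j = if i = j then 1 else 0 := by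
    intro i j
    by_cases hij : i = j
    · subst hij; simp [hv1 i]
    · rw [if_neg hij]
      refine orth_of_mul_eq_zero _ _ (hv1 i) (hv1 j) ?_
      rw [← hv2 i, ← hv2 j]
      exact he'orth i j hij
  have horthvΔ : ∀ i j, star (v (Δ i)) ⬝ᵥ v (Δ j) = if i = j then 1 else 0 := by
    intro i j
    rw [horthv (Δ i) (Δ j)]
    simp [Equiv.apply_eq_iff_eq]
  set w : Matrix (Fin n) (Fin n) ℂ :=
    ∑ i, Matrix.vecMulVec (v (Δ i)) (star (u i)) with hw
  have hstarw : star w = ∑ i, Matrix.vecMulVec (u i) (star (v (Δ i))) := by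
    rw [hw, star_sum]
    refine Finset.sum_congr rfl fun i _ => ?_
    rw [vmv_star, star_star]
  have hesum' : ∑ i, Matrix.vecMulVec (u i) (star (u i)) = 1 := by
    rw [← hesum]
    exact Finset.sum_congr rfl fun i _ => (hu2 i).symm
  have he'sumΔ : ∑ i, Matrix.vecMulVec (v (Δ i)) (star (v (Δ i))) = 1 := by
    rw [← he'sum]
    rw [← Equiv.sum_comp Δ e']
    exact Finset.sum_congr rfl fun i _ => (hv2 (Δ i)).symm
  have hww : w * star w = 1 := by
    rw [hw, hstarw, Finset.sum_mul_sum]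
    have : ∀ i ∈ Finset.univ, ∀ j ∈ Finset.univ,
        Matrix.vecMulVec (v (Δ i)) (star (u i)) * Matrix.vecMulVec (u j) (star (v (Δ j)))
        = if i = j then Matrix.vecMulVec (v (Δ i)) (star (v (Δ i))) else 0 := by
      intro i _ j _
      rw [vmv_mul, horthu i j]
      by_cases hij : i = j
      · subst hij; simp
      · simp [hij]
    rw [Finset.sum_congr rfl fun i hi => Finset.sum_congr rfl fun j hj => this i hi j hj]
    simp only [Finset.sum_ite_eq, Finset.mem_univ, if_true]
    exact he'sumΔ
  have hwmem : w ∈ Matrix.unitaryGroup (Fin n) ℂ := Matrix.mem_unitaryGroup_iff.2 hww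
  have hconjE : ∀ j, star w * e' (Δ j) * w = e j := by
    intro j
    have h1 : star w * e' (Δ j) = Matrix.vecMulVec (u j) (star (v (Δ j))) := by
      rw [hstarw, hv2 (Δ j), Finset.sum_mul]
      have : ∀ i ∈ Finset.univ,
          Matrix.vecMulVec (u i) (star (v (Δ i))) *
            Matrix.vecMulVec (v (Δ j)) (star (v (Δ j)))
          = if i = j then Matrix.vecMulVec (u j) (star (v (Δ j))) else 0 := by
        intro i _
        rw [vmv_mul, horthvΔ i j]
        by_cases hij : i = j
        · subst hij; simp
        · simp [hij]
      rw [Finset.sum_congr rfl this]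
      simp
    rw [h1, hw, Finset.mul_sum]
    have : ∀ k ∈ Finset.univ,
        Matrix.vecMulVec (u j) (star (v (Δ j))) *
          Matrix.vecMulVec (v (Δ k)) (star (u k))
        = if j = k then Matrix.vecMulVec (u j) (star (u j)) else 0 := by
      intro k _
      rw [vmv_mul, horthvΔ j k]
      by_cases hjk : j = k
      · subst hjk; simp
      · simp [hjk]
    rw [Finset.sum_congr rfl this]
    simp only [Finset.sum_ite_eq, Finset.mem_univ, if_true]
    exact (hu2 j).symm
  clear_value w
  refine ⟨w, hwmem, fun f hf => ?_⟩
  have hψw : star w * ψ f * w = ∑ j, f (y' (Δ j)) • e j := by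
    rw [hψ f]
    have h1 : star w * (∑ i, f (y' i) • e' i) * w
        = ∑ i, f (y' i) • (star w * e' i * w) := by
      rw [Finset.mul_sum, Finset.sum_mul]
      exact Finset.sum_congr rfl fun i _ => by
        rw [mul_smul_comm, smul_mul_assoc]
    rw [h1, ← Equiv.sum_comp Δ (fun i => f (y' i) • (star w * e' i * w))]
    exact Finset.sum_congr rfl fun j _ => by rw [hconjE j]
  have hdiff : φ f - star w * ψ f * w = ∑ j, (f (x' j) - f (y' (Δ j))) • e j := by
    rw [hφ f, hψw, ← Finset.sum_sub_distrib]
    exact Finset.sum_congr rfl fun j _ => (sub_smul _ _ _).symm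
  rw [hdiff]
  have hdiff2 : (∑ j, (f (x' j) - f (y' (Δ j))) • e j)
      = ∑ j, (f (x' j) - f (y' (Δ j))) • Matrix.vecMulVec (u j) (star (u j)) :=
    Finset.sum_congr rfl fun j _ => by rw [hu2 j]
  rw [hdiff2]
  have hbound : ∀ j, ‖f (x' j) - f (y' (Δ j))‖ ≤ ε / 2 := by
    intro j
    have := hmod f hf (x' j) (y' (Δ j)) (hΔ j)
    exact this.le
  have := norm_sum_smul_le u horthu hesum'
    (fun j => f (x' j) - f (y' (Δ j))) (ε / 2) (by linarith) hbound
  calc ‖∑ j, (f (x' j) - f (y' (Δ j))) • Matrix.vecMulVec (u j) (star (u j))‖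
      ≤ ε / 2 := this
    _ < ε := by linarith
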